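/- With the notation of the previous statement (v, V ∈ ℝ³ orthogonal with ⟨v,v⟩ = ε̂, ⟨V,V⟩ = C ≠ 0, and Ṽ the generalized cross product), for all i ≠ j one has ε̂·vᵢvⱼ + (C/|C|²)·VᵢVⱼ - (ε̂C/|C|²)·ṼᵢṼⱼ = 0. Equivalently, multiplying by εC with ε̂ε = ε̃: (c - c̃)vᵢvⱼ + ε·VᵢVⱼ = ε̃·ṼᵢṼⱼ, where C = ε̃(c - c̃). -/

import Mathlib

/-- Off-diagonal identities from the proof of Theorem 5: with `v, V` orthogonal for the
signature `(2,1)` product, `⟨v,v⟩ = ε̂`, `⟨V,V⟩ = C ≠ 0`, and `Ṽ` the generalized cross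
product, for all `i ≠ j` one has `ε̂ vᵢ vⱼ + (C/|C|²) Vᵢ Vⱼ - (ε̂ C/|C|²) Ṽᵢ Ṽⱼ = 0`;
equivalently, with `ε̂ ε = ε̃` and `C = ε̃ (c - c̃)`,
`(c - c̃) vᵢ vⱼ + ε Vᵢ Vⱼ = ε̃ Ṽᵢ Ṽⱼ`. -/
theorem stmt_15 (v₁ v₂ v₃ V₁ V₂ V₃ C εh ε εt c ct : ℝ)
    (hεh : εh = 1 ∨ εh = -1) (hε : ε = 1 ∨ ε = -1) (hεt : εt = 1 ∨ εt = -1)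
    (hee : εh * ε = εt) (hcct : c ≠ ct) (hCdef : C = εt * (c - ct)) (hC : C ≠ 0)
    (hv : v₁ * v₁ - v₂ * v₂ + v₃ * v₃ = εh)
    (hvV : v₁ * V₁ - v₂ * V₂ + v₃ * V₃ = 0)
    (hV : V₁ * V₁ - V₂ * V₂ + V₃ * V₃ = C) :
    let W₁ := (v₂ * V₃ - v₃ * V₂)
    let W₂ := -(-1) * (v₁ * V₃ - v₃ * V₁)
    let W₃ := (v₁ * V₂ - v₂ * V₁)
    (εh * (v₁ * v₂) + C / |C| ^ 2 * (V₁ * V₂) - εh * C / |C| ^ 2 * (W₁ * W₂) = 0 ∧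
     εh * (v₁ * v₃) + C / |C| ^ 2 * (V₁ * V₃) - εh * C / |C| ^ 2 * (W₁ * W₃) = 0 ∧
     εh * (v₂ * v₃) + C / |C| ^ 2 * (V₂ * V₃) - εh * C / |C| ^ 2 * (W₂ * W₃) = 0) ∧
    ((c - ct) * (v₁ * v₂) + ε * (V₁ * V₂) = εt * (W₁ * W₂) ∧
     (c - ct) * (v₁ * v₃) + ε * (V₁ * V₃) = εt * (W₁ * W₃) ∧
     (c - ct) * (v₂ * v₃) + ε * (V₂ * V₃) = εt * (W₂ * W₃)) := by
  intro W₁ W₂ W₃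
  have hW12 : W₁ * W₂ = C * (v₁ * v₂) + εh * (V₁ * V₂) := by
    simp only [W₁, W₂]
    linear_combination (v₁ * v₂) * hV + (V₁ * V₂) * hv - (v₁ * V₂ + v₂ * V₁) * hvV
  have hW13 : W₁ * W₃ = C * (v₁ * v₃) + εh * (V₁ * V₃) := by
    simp only [W₁, W₃]
    linear_combination (v₁ * v₃) * hV + (V₁ * V₃) * hv - (v₁ * V₃ + v₃ * V₁) * hvV
  have hW23 : W₂ * W₃ = C * (v₂ * v₃) + εh * (V₂ * V₃) := by
    simp only [W₂, W₃]
    linear_combination (v₂ * v₃) * hV + (V₂ * V₃) * hv - (v₂ * V₃ + v₃ * V₂) * hvV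
  have habs : |C| ^ 2 = C ^ 2 := sq_abs C
  have heh2 : εh * εh = 1 := by rcases hεh with h | h <;> simp [h]
  have het2 : εt * εt = 1 := by rcases hεt with h | h <;> simp [h]
  have hetC : εt * C = c - ct := by
    linear_combination εt * hCdef + (c - ct) * het2
  have hete : εt * εh = ε := by
    linear_combination (-εh) * hee + ε * heh2
  have hC2 : C ^ 2 ≠ 0 := pow_ne_zero 2 hC
  refine ⟨⟨?_, ?_, ?_⟩, ?_, ?_, ?_⟩
  · rw [hW12, habs]; field_simp; linear_combination (-(V₁ * V₂)) * heh2
  · rw [hW13, habs]; field_simp; linear_combination (-(V₁ * V₃)) * heh2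
  · rw [hW23, habs]; field_simp; linear_combination (-(V₂ * V₃)) * heh2
  · rw [hW12]; linear_combination (-(v₁ * v₂)) * hetC - (V₁ * V₂) * hete
  · rw [hW13]; linear_combination (-(v₁ * v₃)) * hetC - (V₁ * V₃) * hete
  · rw [hW23]; linear_combination (-(v₂ * v₃)) * hetC - (V₂ * V₃) * hete
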